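/- In the group G_24 generated by elements s, t, ψ satisfying s³ = 1, t⁴ = 1, tst^{-1} = s², ψs = sψ, tψ = ψt³, ψ² = t², the subgroup generated by t and ψ is isomorphic to the quaternion group Q_8 of order 8, and it is a 2-Sylow subgroup of G_24. Moreover G_24 has order 24. -/

import Mathlib

noncomputable section

/-- The group `G₂₄`, presented with generators `s, t, ψ` (encoded as `0, 1, 2`) and
relations `s³ = 1`, `t⁴ = 1`, `tst⁻¹ = s²`, `ψs = sψ`, `tψ = ψt³`, `ψ² = t²`. -/
def G24rels : Set (FreeGroup (Fin 3)) :=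
  { FreeGroup.of 0 ^ 3, FreeGroup.of 1 ^ 4,
    FreeGroup.of 1 * FreeGroup.of 0 * (FreeGroup.of 1)⁻¹ * (FreeGroup.of 0 ^ 2)⁻¹,
    FreeGroup.of 2 * FreeGroup.of 0 * (FreeGroup.of 0 * FreeGroup.of 2)⁻¹,
    FreeGroup.of 1 * FreeGroup.of 2 * (FreeGroup.of 2 * FreeGroup.of 1 ^ 3)⁻¹,
    FreeGroup.of 2 ^ 2 * (FreeGroup.of 1 ^ 2)⁻¹ }

/-- The group `G₂₄` as a presented group. -/
abbrev G24 := PresentedGroup G24rels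

namespace G24aux

open QuaternionGroup Subgroup

abbrev Hq := QuaternionGroup 6

def fgen : Fin 3 → Hq := ![a 4, xa 0, a 9]

lemma rels_hold : ∀ r ∈ G24rels, FreeGroup.lift fgen r = 1 := by
  intro r hr
  rcases hr with h | h | h | h | h | h <;> subst h <;>
    simp only [map_mul, map_pow, map_inv, FreeGroup.lift_apply_of, fgen] <;> decide

def φ : G24 →* Hq := PresentedGroup.toGroup rels_hold

-- relations in G24
abbrev sH : G24 := PresentedGroup.of 0
abbrev tH : G24 := PresentedGroup.of 1
abbrev pH : G24 := PresentedGroup.of 2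

lemma relmk (r : FreeGroup (Fin 3)) (hr : r ∈ G24rels) :
    PresentedGroup.mk G24rels r = 1 := by
  refine (QuotientGroup.eq_one_iff r).2 (Subgroup.subset_normalClosure hr)

lemma hs3 : sH ^ 3 = 1 := by
  have := relmk _ (show _ ∈ G24rels from Or.inl rfl)
  simp only [map_pow] at this
  exact this

lemma ht4 : tH ^ 4 = 1 := by
  have := relmk _ (show _ ∈ G24rels from Or.inr (Or.inl rfl))
  simp only [map_pow] at this
  exact this

lemma hts : tH * sH = sH ^ 2 * tH := by
  have := relmk _ (show _ ∈ G24rels from Or.inr (Or.inr (Or.inl rfl)))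
  simp only [map_mul, map_pow, map_inv] at this
  rw [mul_inv_eq_one] at this
  have h : tH * sH * tH⁻¹ = sH ^ 2 := this
  calc tH * sH = tH * sH * tH⁻¹ * tH := by group
    _ = sH ^ 2 * tH := by rw [h]

lemma hps : pH * sH = sH * pH := by
  have := relmk _ (show _ ∈ G24rels from Or.inr (Or.inr (Or.inr (Or.inl rfl))))
  simp only [map_mul, map_pow, map_inv] at this
  rw [mul_inv_eq_one] at this
  exact this

lemma htp : tH * pH = pH * tH ^ 3 := by
  have := relmk _ (show _ ∈ G24rels from Or.inr (Or.inr (Or.inr (Or.inr (Or.inl rfl)))))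
  simp only [map_mul, map_pow, map_inv] at this
  rw [mul_inv_eq_one] at this
  exact this

lemma hp2 : pH ^ 2 = tH ^ 2 := by
  have := relmk _ (show _ ∈ G24rels from Or.inr (Or.inr (Or.inr (Or.inr (Or.inr rfl)))))
  simp only [map_mul, map_pow, map_inv] at this
  rw [mul_inv_eq_one] at this
  exact this

end G24aux

namespace G24aux
open QuaternionGroup Subgroup

lemma hp4 : pH ^ 4 = 1 := by
  have : pH ^ 4 = (pH ^ 2) ^ 2 := by group
  rw [this, hp2, show (tH ^ 2) ^ 2 = tH ^ 4 from by group, ht4]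

lemma hcomm : Commute sH pH := (hps).symm

abbrev A : G24 := sH * pH

lemma hA_pow (k : ℕ) : A ^ k = sH ^ k * pH ^ k := hcomm.mul_pow k

lemma hA12 : A ^ 12 = 1 := by
  rw [hA_pow, show (12:ℕ) = 3*4 by norm_num, pow_mul, hs3, one_pow, one_mul,
    mul_comm 3 4, pow_mul, hp4, one_pow]

lemma hA_mod (m : ℕ) : A ^ m = A ^ (m % 12) := by
  conv_lhs => rw [← Nat.div_add_mod m 12]
  rw [pow_add, pow_mul, hA12, one_pow, one_mul]

def NA : ZMod 12 → G24 := fun i => A ^ i.val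

lemma hA_cast (m : ℕ) : A ^ m = NA (m : ZMod 12) := by
  rw [NA, ZMod.val_natCast, ← hA_mod]

lemma NA_eq {m k : ℕ} (h : (m : ZMod 12) = (k : ZMod 12)) : A ^ m = A ^ k := by
  rw [hA_cast m, hA_cast k, h]

-- t-conjugation
lemma hst2 : tH ^ 2 * sH = sH * tH ^ 2 := by
  have h1 : tH * sH = sH ^ 2 * tH := hts
  calc tH ^ 2 * sH = tH * (tH * sH) := by simp [pow_succ, mul_assoc]
    _ = tH * (sH ^ 2 * tH) := by rw [h1]
    _ = (tH * sH) * (sH * tH) := by simp [pow_succ, mul_assoc]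
    _ = (sH ^ 2 * tH) * (sH * tH) := by rw [h1]
    _ = sH ^ 2 * (tH * sH) * tH := by simp [mul_assoc]
    _ = sH ^ 2 * (sH ^ 2 * tH) * tH := by rw [h1]
    _ = sH ^ 3 * (sH * tH ^ 2) := by simp [pow_succ, mul_assoc]
    _ = sH * tH ^ 2 := by rw [hs3, one_mul]

lemma hAt : A * tH = tH * A ^ 11 := by
  -- A * t = s p t ; t * A^11
  have hp3 : pH ^ 3 = pH * tH ^ 2 := by
    calc pH ^ 3 = pH * pH ^ 2 := by group
      _ = pH * tH ^ 2 := by rw [hp2]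
  have htp' : pH * tH = tH ^ 3 * pH := by
    -- from t p = p t^3 : p t = ? we need; t^3 p = t^2 (t p) = t^2 p t^3 = ?
    have h := htp
    calc pH * tH = pH * tH * (tH ^ 3 * (tH ^ 3)⁻¹) := by group
      _ = pH * tH ^ 4 * (tH ^ 3)⁻¹ := by group
      _ = pH * (tH ^ 3)⁻¹ := by rw [ht4, mul_one]
      _ = tH ^ 3 * ((tH ^ 3)⁻¹ * pH * (tH ^ 3)⁻¹) := by group
      _ = tH ^ 3 * pH := by
          congr 1
          have : tH * pH * (tH ^ 3)⁻¹ = pH := by rw [htp]; group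
          calc (tH ^ 3)⁻¹ * pH * (tH ^ 3)⁻¹
              = (tH ^ 4)⁻¹ * (tH * pH * (tH ^ 3)⁻¹) := by group
            _ = (tH ^ 4)⁻¹ * pH := by rw [this]
            _ = pH := by rw [ht4]; group
  have hA11 : A ^ 11 = sH ^ 2 * pH ^ 3 := by
    rw [hA_pow]
    congr 1
    · calc sH ^ 11 = (sH ^ 3) ^ 3 * sH ^ 2 := by group
        _ = sH ^ 2 := by rw [hs3, one_pow, one_mul]
    · calc pH ^ 11 = (pH ^ 4) ^ 2 * pH ^ 3 := by group
        _ = pH ^ 3 := by rw [hp4, one_pow, one_mul]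
  rw [hA11, hp3]
  -- goal : s * p * t = t * (s^2 * (p * t^2))
  calc sH * pH * tH = sH * (pH * tH) := by group
    _ = sH * (tH ^ 3 * pH) := by rw [htp']
    _ = sH * tH ^ 2 * (tH * pH) := by group
    _ = sH * tH ^ 2 * (pH * tH ^ 3) := by rw [htp]
    _ = (tH ^ 2 * sH) * (pH * tH ^ 3) := by rw [hst2]
    _ = tH * (tH * sH) * pH * tH ^ 3 := by simp [pow_succ, mul_assoc]
    _ = tH * (sH ^ 2 * tH) * pH * tH ^ 3 := by rw [hts]
    _ = tH * sH ^ 2 * (tH * pH) * tH ^ 3 := by group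
    _ = tH * sH ^ 2 * (pH * tH ^ 3) * tH ^ 3 := by rw [htp]
    _ = tH * sH ^ 2 * pH * tH ^ 6 := by group
    _ = tH * sH ^ 2 * pH * (tH ^ 4 * tH ^ 2) := by group
    _ = tH * (sH ^ 2 * (pH * tH ^ 2)) := by rw [ht4]; group

lemma hAt_pow (m : ℕ) : A ^ m * tH = tH * A ^ (11 * m) := by
  induction m with
  | zero => simp
  | succ k ih =>
    calc A ^ (k+1) * tH = A ^ k * (A * tH) := by simp [pow_succ, mul_assoc]
      _ = A ^ k * (tH * A ^ 11) := by rw [hAt]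
      _ = (A ^ k * tH) * A ^ 11 := by group
      _ = tH * A ^ (11 * k) * A ^ 11 := by rw [ih]
      _ = tH * A ^ (11 * k + 11) := by group
      _ = tH * A ^ (11 * (k + 1)) := by rw [show 11 * (k + 1) = 11 * k + 11 from by ring]

lemma ht2A : tH ^ 2 = A ^ 6 := by
  rw [hA_pow, show sH ^ 6 = (sH ^ 3) ^ 2 from by group, hs3, one_pow, one_mul,
    show pH ^ 6 = (pH ^ 2) ^ 3 from by group, hp2,
    show (tH ^ 2) ^ 3 = tH ^ 4 * tH ^ 2 from by group, ht4, one_mul]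

end G24aux

namespace G24aux
open QuaternionGroup Subgroup

def ιfun : Hq → G24
  | a i => A ^ i.val
  | xa i => tH * A ^ i.val

lemma val_cast (i : ZMod 12) : ((i.val : ℕ) : ZMod 12) = i := by
  simp [ZMod.natCast_val, ZMod.cast_id]

lemma h11 : ((11 : ℕ) : ZMod 12) = -1 := by decide

lemma ιmul : ∀ x y : Hq, ιfun (x * y) = ιfun x * ιfun y := by
  rintro (i | i) (j | j) <;>
    simp only [a_mul_a, a_mul_xa, xa_mul_a, xa_mul_xa, ιfun]
  · rw [← pow_add]
    exact NA_eq (by push_cast [val_cast]; ring)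
  · rw [← mul_assoc, hAt_pow, mul_assoc, ← pow_add]
    congr 1
    exact NA_eq (by push_cast [val_cast]; rw [show (11 : ZMod (2*6)) = -1 from by decide]; ring)
  · rw [mul_assoc, ← pow_add]
    congr 1
    exact NA_eq (by push_cast [val_cast]; ring)
  · calc ιfun (a ((6 : ℕ) + j - i))
        = A ^ (((6:ℕ) + j - i : ZMod 12)).val := rfl
      _ = A ^ ((6 : ℕ) + 11 * i.val + j.val) := by
          refine (NA_eq ?_).symm
          push_cast [val_cast]; rw [show (11 : ZMod (2*6)) = -1 from by decide]; ring
      _ = A ^ (6:ℕ) * A ^ (11 * i.val) * A ^ j.val := by rw [pow_add, pow_add]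
      _ = tH ^ 2 * A ^ (11 * i.val) * A ^ j.val := by rw [ht2A]
      _ = tH * (tH * A ^ (11 * i.val)) * A ^ j.val := by simp [pow_succ, mul_assoc]
      _ = tH * (A ^ i.val * tH) * A ^ j.val := by rw [hAt_pow]
      _ = tH * A ^ i.val * (tH * A ^ j.val) := by simp [mul_assoc]

def ι : Hq →* G24 := MonoidHom.mk' ιfun ιmul

lemma ι_a4 : ι (a 4) = sH := by
  show A ^ (4 : ZMod 12).val = sH
  rw [show (4 : ZMod 12).val = 4 from rfl, hA_pow,
    show sH ^ 4 = sH ^ 3 * sH from by simp [pow_succ, mul_assoc], hs3, hp4, one_mul, mul_one]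

lemma ι_xa0 : ι (xa 0) = tH := by
  show tH * A ^ (0 : ZMod 12).val = tH
  rw [show (0 : ZMod 12).val = 0 from rfl, pow_zero, mul_one]

lemma ι_a9 : ι (a 9) = pH := by
  show A ^ (9 : ZMod 12).val = pH
  rw [show (9 : ZMod 12).val = 9 from rfl, hA_pow,
    show sH ^ 9 = (sH ^ 3) ^ 3 from by simp [pow_succ, mul_assoc], hs3, one_pow, one_mul,
    show pH ^ 9 = (pH ^ 4) ^ 2 * pH from by simp [pow_succ, mul_assoc], hp4, one_pow, one_mul]

lemma ιsurj : Function.Surjective ι := by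
  intro x
  have hx : x ∈ ι.range := by
    refine PresentedGroup.generated_by G24rels ι.range (fun j => ?_) x
    fin_cases j
    · exact ⟨a 4, ι_a4⟩
    · exact ⟨xa 0, ι_xa0⟩
    · exact ⟨a 9, ι_a9⟩
  exact hx

lemma φsurj : Function.Surjective φ := by
  have h1 : (a 1 : Hq) ∈ φ.range := by
    refine ⟨PresentedGroup.of 0 * PresentedGroup.of 2, ?_⟩
    rw [map_mul]
    show fgen 0 * fgen 2 = a 1
    decide
  have hx0 : (xa 0 : Hq) ∈ φ.range := ⟨PresentedGroup.of 1, by show fgen 1 = xa 0; decide⟩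
  rintro (i | i)
  · have : (a 1 : Hq) ^ i.val = a i := by rw [a_one_pow, val_cast]
    exact this ▸ pow_mem h1 i.val
  · have : (a 1 : Hq) ^ (-i).val * xa 0 = xa i := by
      rw [a_one_pow, val_cast, a_mul_xa]
      congr 1
      ring
    exact this ▸ mul_mem (pow_mem h1 (-i).val) hx0

lemma finG24 : Finite G24 := Finite.of_surjective ι ιsurj

lemma cardHq : Nat.card Hq = 24 := by
  rw [Nat.card_eq_fintype_card, QuaternionGroup.card]

lemma cardG24 : Nat.card G24 = 24 := by
  have := finG24
  refine le_antisymm ?_ ?_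
  · rw [← cardHq]; exact Nat.card_le_card_of_surjective ι ιsurj
  · rw [← cardHq]; exact Nat.card_le_card_of_surjective φ φsurj

lemma φbij : Function.Bijective φ := by
  have := finG24
  exact (Nat.bijective_iff_surjective_and_card φ).mpr ⟨φsurj, by rw [cardG24, cardHq]⟩

def e : G24 ≃* Hq := MulEquiv.ofBijective φ φbij

end G24aux

namespace G24aux
open QuaternionGroup Subgroup

def jfun : QuaternionGroup 2 → Hq
  | a i => a (3 * (i.val : ZMod 12))
  | xa i => xa (3 * (i.val : ZMod 12))

lemma jmul : ∀ x y : QuaternionGroup 2, jfun (x * y) = jfun x * jfun y := by decide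

def jmon : QuaternionGroup 2 →* Hq := MonoidHom.mk' jfun jmul

lemma jinj : Function.Injective jmon := by
  intro x y h
  revert h
  revert x y
  decide

lemma KH_eq : closure {(xa 0 : Hq), a 9} = jmon.range := by
  have key : ∀ m : ℕ, (a 9 : Hq) ^ m = a ((9 * m : ℕ) : ZMod 12) := by
    intro m
    rw [show (a 9 : Hq) = a 1 ^ 9 from by decide, ← pow_mul, a_one_pow]
  have castkey : ∀ m : ℕ, ((9 * (3 * m) : ℕ) : ZMod 12) = 3 * (m : ZMod 12) := by
    intro m
    push_cast
    rw [show (9 : ZMod 12) * (3 * (m : ZMod 12)) = 27 * (m : ZMod 12) from by ring,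
      show (27 : ZMod 12) = 3 from by decide]
  apply le_antisymm
  · rw [closure_le]
    rintro x (rfl | rfl)
    · exact ⟨xa 0, by decide⟩
    · exact ⟨a 3, by decide⟩
  · rintro x ⟨q, rfl⟩
    have h9 : (a 9 : Hq) ∈ closure {(xa 0 : Hq), a 9} :=
      subset_closure (by simp)
    have hx0 : (xa 0 : Hq) ∈ closure {(xa 0 : Hq), a 9} :=
      subset_closure (by simp)
    rcases q with i | i
    · have : jmon (a i) = (a 9 : Hq) ^ (3 * i.val) := by
        show a (3 * (i.val : ZMod 12)) = _
        rw [key, castkey]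
      rw [this]
      exact pow_mem h9 _
    · have : jmon (xa i) = xa 0 * (a 9 : Hq) ^ (3 * i.val) := by
        show xa (3 * (i.val : ZMod 12)) = _
        rw [key, castkey, xa_mul_a, zero_add]
      rw [this]
      exact mul_mem hx0 (pow_mem h9 _)

abbrev K : Subgroup G24 := closure {tH, pH}

lemma e_tH : e tH = xa 0 := by
  show φ (PresentedGroup.of 1) = xa 0
  rw [φ, PresentedGroup.toGroup.of]
  decide

lemma e_pH : e pH = a 9 := by
  show φ (PresentedGroup.of 2) = a 9
  rw [φ, PresentedGroup.toGroup.of]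
  decide

lemma K_map : Subgroup.map e.toMonoidHom K = jmon.range := by
  rw [MonoidHom.map_closure, Set.image_insert_eq, Set.image_singleton,
    show e.toMonoidHom tH = xa 0 from e_tH, show e.toMonoidHom pH = a 9 from e_pH, KH_eq]

def Kequiv : K ≃* QuaternionGroup 2 :=
  ((K.equivMapOfInjective e.toMonoidHom e.injective).trans
    (MulEquiv.subgroupCongr K_map)).trans (MonoidHom.ofInjective jinj).symm

lemma cardK : Nat.card K = 8 := by
  rw [Nat.card_congr Kequiv.toEquiv, Nat.card_eq_fintype_card, QuaternionGroup.card]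

lemma fact24 : (Nat.factorization 24) 2 = 3 := by
  rw [show (24 : ℕ) = 2 ^ 3 * 3 from by norm_num,
    Nat.factorization_mul (by norm_num) (by norm_num),
    Nat.Prime.factorization_pow (by norm_num),
    Nat.Prime.factorization (by norm_num)]
  simp [Finsupp.single_apply]

end G24aux

/-- in `G₂₄`, the subgroup generated by `t` and `ψ` is isomorphic to the
quaternion group `Q₈` of order 8 and is a 2-Sylow subgroup of `G₂₄`; moreover `G₂₄` has
order 24. -/
theorem G24_sylow_two_quaternion :
    Nat.card G24 = 24 ∧
      Nat.card ↥(Subgroup.closure {PresentedGroup.of (rels := G24rels) 1,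
        PresentedGroup.of 2}) = 8 ∧
      Nonempty (↥(Subgroup.closure {PresentedGroup.of (rels := G24rels) 1,
        PresentedGroup.of 2}) ≃* QuaternionGroup 2) ∧
      ∃ P : Sylow 2 G24, (P : Subgroup G24) =
        Subgroup.closure {PresentedGroup.of (rels := G24rels) 1, PresentedGroup.of 2} := by
  haveI := G24aux.finG24
  haveI : Fact (Nat.Prime 2) := ⟨by norm_num⟩
  refine ⟨G24aux.cardG24, G24aux.cardK, ⟨G24aux.Kequiv⟩, ?_⟩
  refine ⟨Sylow.ofCard (p := 2) G24aux.K ?_, rfl⟩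
  rw [G24aux.cardK, G24aux.cardG24, G24aux.fact24]; norm_num


end
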